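/- Let φ be a semiflow on ℝⁿ whose fixed point x* has basin of attraction B, let λ₁, …, λ_n be complex numbers with Re(λ_i) < 0 for all i, and let s_i : B → ℂ, i = 1, …, n, be continuous functions satisfying s_i(φ(t,x)) = e^{λ_i t} s_i(x) for all x ∈ B and t ≥ 0. Assume that the common zero set ⋂_i {x ∈ B : s_i(x) = 0} equals {x*}. Fix p ≥ 1 and positive weights β_1, …, β_n, and define W(x) = (Σ_i β_i |s_i(x)|^p)^{1/p} for x ∈ B. Then: (1) W(x*) = 0 and W(x) > 0 for all x ∈ B \ {x*}; (2) W decays exponentially along trajectories: W(φ(t,x)) ≤ e^{λ̄ t} W(x) for all x ∈ B and t ≥ 0, where λ̄ = max_i Re(λ_i) < 0; in particular t ↦ W(φ(t,x)) is strictly decreasing for every x ∈ B \ {x*}, so W is a Lyapunov function on B. -/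

import Mathlib

open Filter Topology

/-- Let `φ` be a semiflow on `ℝⁿ` whose fixed point `x*` has basin `B`, let
`λ₁, …, λ_n ∈ ℂ` have negative real parts, and let `s_i : B → ℂ` be continuous functions
with `s_i (φ t x) = e^{λ_i t} s_i x` whose common zero set in `B` is `{x*}`. For `p ≥ 1`
and positive weights `β_i`, define `W x = (Σ_i β_i |s_i x|^p)^{1/p}`. Then `W x* = 0`,
`W > 0` on `B \ {x*}`, `W (φ t x) ≤ e^{λ̄ t} W x` where `λ̄ = max_i Re λ_i`, and
`t ↦ W (φ t x)` is strictly decreasing on `[0, ∞)` for every `x ∈ B \ {x*}`; hence `W` is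
a Lyapunov function on `B`. -/
theorem koopman_weighted_norm_is_lyapunov {n : ℕ} (hn : 0 < n)
    (φ : ℝ → (Fin n → ℝ) → (Fin n → ℝ))
    (hcont : Continuous fun q : ℝ × (Fin n → ℝ) => φ q.1 q.2)
    (h0 : ∀ x, φ 0 x = x)
    (hsemi : ∀ t ≥ (0 : ℝ), ∀ s ≥ (0 : ℝ), ∀ x, φ (t + s) x = φ t (φ s x))
    (xs : Fin n → ℝ) (hfix : ∀ t ≥ (0 : ℝ), φ t xs = xs)
    (B : Set (Fin n → ℝ))
    (hB : B = {x | Tendsto (fun t => φ t x) atTop (𝓝 xs)})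
    (l : Fin n → ℂ) (hl : ∀ i, (l i).re < 0)
    (s : Fin n → (Fin n → ℝ) → ℂ)
    (hscont : ∀ i, ContinuousOn (s i) B)
    (heig : ∀ i, ∀ x ∈ B, ∀ t ≥ (0 : ℝ), s i (φ t x) = Complex.exp (l i * t) * s i x)
    (hzero : (⋂ i, {x ∈ B | s i x = 0}) = {xs})
    (p : ℝ) (hp : 1 ≤ p)
    (b : Fin n → ℝ) (hb : ∀ i, 0 < b i)
    (W : (Fin n → ℝ) → ℝ)
    (hW : ∀ x, W x = (∑ i, b i * ‖s i x‖ ^ p) ^ (1 / p)) :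
    W xs = 0 ∧
    (∀ x ∈ B, x ≠ xs → 0 < W x) ∧
    (∀ x ∈ B, ∀ t ≥ (0 : ℝ), W (φ t x) ≤ Real.exp ((⨆ i, (l i).re) * t) * W x) ∧
    (∀ x ∈ B, x ≠ xs → StrictAntiOn (fun t => W (φ t x)) (Set.Ici (0 : ℝ))) :=
  by
  haveI : Nonempty (Fin n) := ⟨⟨0, hn⟩⟩
  have hp0 : (0 : ℝ) < p := lt_of_lt_of_le one_pos hp
  have hxsmem : xs ∈ ⋂ i, {x ∈ B | s i x = 0} := by rw [hzero]; exact rfl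
  simp only [Set.mem_iInter, Set.mem_setOf_eq] at hxsmem
  have hxsB : xs ∈ B := (hxsmem ⟨0, hn⟩).1
  have hszero : ∀ i, s i xs = 0 := fun i => (hxsmem i).2
  set lb := ⨆ i, (l i).re with hlb
  have hbdd : BddAbove (Set.range fun i => (l i).re) :=
    Set.Finite.bddAbove (Set.finite_range _)
  have hle : ∀ i, (l i).re ≤ lb := fun i => le_ciSup hbdd i
  have hlbneg : lb < 0 := by
    obtain ⟨i, hi⟩ := Finite.exists_max fun i => (l i).re
    exact lt_of_le_of_lt (ciSup_le hi) (hl i)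
  have hsum_nonneg : ∀ x, 0 ≤ ∑ i, b i * ‖s i x‖ ^ p := fun x =>
    Finset.sum_nonneg fun i _ =>
      mul_nonneg (hb i).le (Real.rpow_nonneg (norm_nonneg _) p)
  have hWnonneg : ∀ x, 0 ≤ W x := fun x => by
    rw [hW]; exact Real.rpow_nonneg (hsum_nonneg x) _
  have hWxs : W xs = 0 := by
    rw [hW]
    have : ∀ i ∈ Finset.univ, b i * ‖s i xs‖ ^ p = 0 := by
      intro i _
      rw [hszero i, norm_zero, Real.zero_rpow hp0.ne', mul_zero]
    rw [Finset.sum_eq_zero this, Real.zero_rpow]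
    positivity
  have hexists : ∀ x ∈ B, x ≠ xs → ∃ i, s i x ≠ 0 := by
    intro x hx hne
    by_contra h
    push_neg at h
    have : x ∈ ⋂ i, {x ∈ B | s i x = 0} := by
      simp only [Set.mem_iInter, Set.mem_setOf_eq]
      exact fun i => ⟨hx, h i⟩
    rw [hzero] at this
    exact hne this
  have hWpos : ∀ x ∈ B, x ≠ xs → 0 < W x := by
    intro x hx hne
    obtain ⟨i, hi⟩ := hexists x hx hne
    rw [hW]
    apply Real.rpow_pos_of_pos
    apply Finset.sum_pos' (fun j _ =>
      mul_nonneg (hb j).le (Real.rpow_nonneg (norm_nonneg _) p))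
    refine ⟨i, Finset.mem_univ i, ?_⟩
    have habs : 0 < ‖s i x‖ := by
      simpa [AbsoluteValue.pos_iff] using hi
    exact mul_pos (hb i) (Real.rpow_pos_of_pos habs p)
  have hdecay : ∀ x ∈ B, ∀ t ≥ (0 : ℝ), W (φ t x) ≤ Real.exp (lb * t) * W x := by
    intro x hx t ht
    rw [hW, hW]
    have hsum : ∑ i, b i * ‖s i (φ t x)‖ ^ p
        ≤ Real.exp (lb * t * p) * ∑ i, b i * ‖s i x‖ ^ p := by
      rw [Finset.mul_sum]
      apply Finset.sum_le_sum
      intro i _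
      rw [heig i x hx t ht, norm_mul, Complex.norm_exp]
      have hre : (l i * (t : ℂ)).re = (l i).re * t := by
        simp [Complex.mul_re]
      rw [hre, Real.mul_rpow (Real.exp_pos _).le (norm_nonneg _),
        ← Real.exp_mul]
      have h1 : Real.exp ((l i).re * t * p) ≤ Real.exp (lb * t * p) := by
        apply Real.exp_le_exp.mpr
        apply mul_le_mul_of_nonneg_right _ hp0.le
        exact mul_le_mul_of_nonneg_right (hle i) ht
      calc b i * (Real.exp ((l i).re * t * p) * ‖s i x‖ ^ p)
          = Real.exp ((l i).re * t * p) * (b i * ‖s i x‖ ^ p) := by ring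
        _ ≤ Real.exp (lb * t * p) * (b i * ‖s i x‖ ^ p) := by
            apply mul_le_mul_of_nonneg_right h1
            exact mul_nonneg (hb i).le (Real.rpow_nonneg (norm_nonneg _) p)
    calc (∑ i, b i * ‖s i (φ t x)‖ ^ p) ^ (1 / p)
        ≤ (Real.exp (lb * t * p) * ∑ i, b i * ‖s i x‖ ^ p) ^ (1 / p) :=
          Real.rpow_le_rpow (hsum_nonneg _) hsum (by positivity)
      _ = Real.exp (lb * t) * (∑ i, b i * ‖s i x‖ ^ p) ^ (1 / p) := by
          rw [Real.mul_rpow (Real.exp_pos _).le (hsum_nonneg _), ← Real.exp_mul]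
          congr 2
          field_simp
  refine ⟨hWxs, hWpos, fun x hx t ht => hdecay x hx t ht, ?_⟩
  intro x hx hne t1 ht1 t2 ht2 hlt
  simp only [Set.mem_Ici] at ht1 ht2
  set y := φ t1 x with hy
  have hyB : y ∈ B := by
    rw [hB]
    have hxB : Tendsto (fun t => φ t x) atTop (𝓝 xs) := by rw [hB] at hx; exact hx
    have h1 : Tendsto (fun u : ℝ => φ (u + t1) x) atTop (𝓝 xs) :=
      hxB.comp (tendsto_atTop_add_const_right atTop t1 tendsto_id)
    apply h1.congr'
    filter_upwards [eventually_ge_atTop (0 : ℝ)] with u hu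
    rw [hsemi u hu t1 ht1 x]
  have hyne : y ≠ xs := by
    obtain ⟨i, hi⟩ := hexists x hx hne
    intro h
    have : s i y = Complex.exp (l i * t1) * s i x := heig i x hx t1 ht1
    rw [h, hszero i] at this
    exact hi (by
      have := this.symm
      rcases mul_eq_zero.mp this with h' | h'
      · exact absurd h' (Complex.exp_ne_zero _)
      · exact h')
  have hyeq : φ t2 x = φ (t2 - t1) y := by
    rw [hy, ← hsemi (t2 - t1) (by linarith) t1 ht1 x]
    congr 1
    ring
  have hWy : 0 < W y := hWpos y hyB hyne
  have := hdecay y hyB (t2 - t1) (by linarith)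
  calc W (φ t2 x) = W (φ (t2 - t1) y) := by rw [hyeq]
    _ ≤ Real.exp (lb * (t2 - t1)) * W y := this
    _ < 1 * W y := by
        apply mul_lt_mul_of_pos_right _ hWy
        rw [← Real.exp_zero]
        apply Real.exp_lt_exp.mpr
        exact mul_neg_of_neg_of_pos hlbneg (by linarith)
    _ = W y := one_mul _
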